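/- Let n ≥ 3 and let f = (f_0, …, f_n) be given by f_k = a_0^{n−k} b_0^k + a_1^{n−k} b_1^k, where v_0 = (a_0, b_0) and v_1 = (a_1, b_1) are linearly independent vectors in ℂ². If f ∈ 𝒜₃, then 2(a_0 a_1 + b_0 b_1)² = −(a_1 b_0 − a_0 b_1)² (i.e., θ(v_0, v_1) = −1/2). -/
import Mathlib

/-- `α = (1 + i)/√2`, a primitive 8th root of unity with `α² = i`. -/
noncomputable def alpha : ℂ := (1 + Complex.I) / (Real.sqrt 2 : ℂ)

/-- `f ∈ 𝒜₃`: there exist `H ∈ O₂(ℂ)`, a nonzero `c ∈ ℂ`, and `r ∈ {0,1,2,3}` such that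
`f = c ((H(1,α))^{⊗n} + i^r (H(1,-α))^{⊗n})`. -/
def MemA3 (n : ℕ) (f : ℕ → ℂ) : Prop :=
  ∃ (H : Matrix (Fin 2) (Fin 2) ℂ) (c : ℂ) (r : ℕ),
    H.transpose * H = 1 ∧ c ≠ 0 ∧ r ≤ 3 ∧
    ∀ k ≤ n, f k =
      c * (H.mulVec ![1, alpha] 0 ^ (n - k) * H.mulVec ![1, alpha] 1 ^ k +
        Complex.I ^ r *
          (H.mulVec ![1, -alpha] 0 ^ (n - k) * H.mulVec ![1, -alpha] 1 ^ k))

/-- One power vector: if `c·(a^{n-k} b^k) = 0` for all `k ≤ n` and `(a,b) ≠ 0`, then `c = 0`. -/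
lemma powvec_one (n : ℕ) (a b c : ℂ) (hx : ¬(a = 0 ∧ b = 0))
    (h : ∀ k ≤ n, c * (a ^ (n - k) * b ^ k) = 0) : c = 0 := by
  by_cases ha : a = 0
  · have hb : b ≠ 0 := fun hb => hx ⟨ha, hb⟩
    have := h n le_rfl
    simp only [Nat.sub_self, pow_zero, one_mul] at this
    rcases mul_eq_zero.mp this with h' | h'
    · exact h'
    · exact absurd h' (pow_ne_zero _ hb)
  · have := h 0 (Nat.zero_le _)
    simp only [Nat.sub_zero, pow_zero, mul_one] at this
    rcases mul_eq_zero.mp this with h' | h'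
    · exact h'
    · exact absurd h' (pow_ne_zero _ ha)

/-- Two pairwise independent power vectors are linearly independent (`n ≥ 1`). -/
lemma powvec_two (n : ℕ) (hn : 1 ≤ n) (a₁ b₁ a₂ b₂ c₁ c₂ : ℂ)
    (h12 : a₁ * b₂ - a₂ * b₁ ≠ 0)
    (h : ∀ k ≤ n, c₁ * (a₁ ^ (n - k) * b₁ ^ k) + c₂ * (a₂ ^ (n - k) * b₂ ^ k) = 0) :
    c₁ = 0 ∧ c₂ = 0 := by
  have hx1 : ¬(a₁ = 0 ∧ b₁ = 0) := by rintro ⟨h1, h2⟩; apply h12; rw [h1, h2]; ring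
  have hx2 : ¬(a₂ = 0 ∧ b₂ = 0) := by rintro ⟨h1, h2⟩; apply h12; rw [h1, h2]; ring
  have h' : ∀ k ≤ n - 1, (c₁ * (a₁ * b₂ - a₂ * b₁)) * (a₁ ^ (n - 1 - k) * b₁ ^ k) = 0 := by
    intro k hk
    have hk1 : k + 1 ≤ n := by omega
    have e1 := h k (by omega)
    have e2 := h (k + 1) hk1
    have r1 : n - k = (n - 1 - k) + 1 := by omega
    have r2 : n - (k + 1) = n - 1 - k := by omega
    rw [r1] at e1
    rw [r2] at e2
    simp only [pow_succ] at e1 e2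
    linear_combination b₂ * e1 - a₂ * e2
  have hc1 : c₁ * (a₁ * b₂ - a₂ * b₁) = 0 := powvec_one (n - 1) a₁ b₁ _ hx1 h'
  have hc1' : c₁ = 0 := by
    rcases mul_eq_zero.mp hc1 with h' | h'
    · exact h'
    · exact absurd h' h12
  refine ⟨hc1', powvec_one n a₂ b₂ _ hx2 fun k hk => ?_⟩
  have := h k hk
  rw [hc1'] at this
  linear_combination this

/-- Three pairwise independent power vectors are linearly independent (`n ≥ 2`). -/
lemma powvec_three (n : ℕ) (hn : 2 ≤ n) (a₁ b₁ a₂ b₂ a₃ b₃ c₁ c₂ c₃ : ℂ)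
    (h12 : a₁ * b₂ - a₂ * b₁ ≠ 0) (h13 : a₁ * b₃ - a₃ * b₁ ≠ 0)
    (h23 : a₂ * b₃ - a₃ * b₂ ≠ 0)
    (h : ∀ k ≤ n, c₁ * (a₁ ^ (n - k) * b₁ ^ k) + c₂ * (a₂ ^ (n - k) * b₂ ^ k)
      + c₃ * (a₃ ^ (n - k) * b₃ ^ k) = 0) :
    c₁ = 0 ∧ c₂ = 0 ∧ c₃ = 0 := by
  have hx3 : ¬(a₃ = 0 ∧ b₃ = 0) := by rintro ⟨h1, h2⟩; apply h13; rw [h1, h2]; ring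
  have h' : ∀ k ≤ n - 1, (c₁ * (a₁ * b₃ - a₃ * b₁)) * (a₁ ^ (n - 1 - k) * b₁ ^ k)
      + (c₂ * (a₂ * b₃ - a₃ * b₂)) * (a₂ ^ (n - 1 - k) * b₂ ^ k) = 0 := by
    intro k hk
    have hk1 : k + 1 ≤ n := by omega
    have e1 := h k (by omega)
    have e2 := h (k + 1) hk1
    have r1 : n - k = (n - 1 - k) + 1 := by omega
    have r2 : n - (k + 1) = n - 1 - k := by omega
    rw [r1] at e1
    rw [r2] at e2
    simp only [pow_succ] at e1 e2
    linear_combination b₃ * e1 - a₃ * e2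
  obtain ⟨u1, u2⟩ := powvec_two (n - 1) (by omega) a₁ b₁ a₂ b₂ _ _ h12 h'
  have hc1 : c₁ = 0 := by
    rcases mul_eq_zero.mp u1 with h' | h'
    · exact h'
    · exact absurd h' h13
  have hc2 : c₂ = 0 := by
    rcases mul_eq_zero.mp u2 with h' | h'
    · exact h'
    · exact absurd h' h23
  refine ⟨hc1, hc2, powvec_one n a₃ b₃ _ hx3 fun k hk => ?_⟩
  have := h k hk
  rw [hc1, hc2] at this
  linear_combination this

/-- Four pairwise independent power vectors are linearly independent (`n ≥ 3`). -/
lemma powvec_four (n : ℕ) (hn : 3 ≤ n) (a₁ b₁ a₂ b₂ a₃ b₃ a₄ b₄ c₁ c₂ c₃ c₄ : ℂ)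
    (h12 : a₁ * b₂ - a₂ * b₁ ≠ 0) (h13 : a₁ * b₃ - a₃ * b₁ ≠ 0)
    (h14 : a₁ * b₄ - a₄ * b₁ ≠ 0) (h23 : a₂ * b₃ - a₃ * b₂ ≠ 0)
    (_h24 : a₂ * b₄ - a₄ * b₂ ≠ 0) (_h34 : a₃ * b₄ - a₄ * b₃ ≠ 0)
    (h : ∀ k ≤ n, c₁ * (a₁ ^ (n - k) * b₁ ^ k) + c₂ * (a₂ ^ (n - k) * b₂ ^ k)
      + c₃ * (a₃ ^ (n - k) * b₃ ^ k) + c₄ * (a₄ ^ (n - k) * b₄ ^ k) = 0) :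
    c₁ = 0 := by
  have h' : ∀ k ≤ n - 1, (c₁ * (a₁ * b₄ - a₄ * b₁)) * (a₁ ^ (n - 1 - k) * b₁ ^ k)
      + (c₂ * (a₂ * b₄ - a₄ * b₂)) * (a₂ ^ (n - 1 - k) * b₂ ^ k)
      + (c₃ * (a₃ * b₄ - a₄ * b₃)) * (a₃ ^ (n - 1 - k) * b₃ ^ k) = 0 := by
    intro k hk
    have hk1 : k + 1 ≤ n := by omega
    have e1 := h k (by omega)
    have e2 := h (k + 1) hk1
    have r1 : n - k = (n - 1 - k) + 1 := by omega
    have r2 : n - (k + 1) = n - 1 - k := by omega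
    rw [r1] at e1
    rw [r2] at e2
    simp only [pow_succ] at e1 e2
    linear_combination b₄ * e1 - a₄ * e2
  obtain ⟨u1, -, -⟩ := powvec_three (n - 1) (by omega) a₁ b₁ a₂ b₂ a₃ b₃ _ _ _ h12 h13 h23 h'
  rcases mul_eq_zero.mp u1 with h' | h'
  · exact h'
  · exact absurd h' h14

/-- Extracting a proportionality factor from a vanishing cross product. -/
lemma par (a b a' b' : ℂ) (h : a * b' - a' * b = 0) (hx : ¬(a = 0 ∧ b = 0)) :
    ∃ l : ℂ, a' = l * a ∧ b' = l * b := by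
  by_cases ha : a = 0
  · have hb : b ≠ 0 := fun hb => hx ⟨ha, hb⟩
    have ha' : a' = 0 := by
      have h0 : a' * b = 0 := by rw [ha] at h; linear_combination -h
      rcases mul_eq_zero.mp h0 with h' | h'
      · exact h'
      · exact absurd h' hb
    exact ⟨b' / b, by rw [ha', ha]; ring, by field_simp⟩
  · refine ⟨a' / a, by field_simp, ?_⟩
    field_simp
    linear_combination h

lemma cross_trans (a b a' b' a'' b'' : ℂ) (h1 : a * b' - a' * b = 0)
    (h2 : a * b'' - a'' * b = 0) (hx : ¬(a = 0 ∧ b = 0)) : a' * b'' - a'' * b' = 0 := by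
  obtain ⟨l, hl1, hl2⟩ := par a b a' b' h1 hx
  obtain ⟨m, hm1, hm2⟩ := par a b a'' b'' h2 hx
  rw [hl1, hl2, hm1, hm2]; ring

/-- Uniqueness of rank-two decompositions: the lines must pair up. -/
lemma pairing (n : ℕ) (hn : 3 ≤ n) (a₁ b₁ a₂ b₂ a₃ b₃ a₄ b₄ c₁ c₂ c₃ c₄ : ℂ)
    (h12 : a₁ * b₂ - a₂ * b₁ ≠ 0) (h34 : a₃ * b₄ - a₄ * b₃ ≠ 0)
    (hc1 : c₁ ≠ 0) (hc2 : c₂ ≠ 0)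
    (h : ∀ k ≤ n, c₁ * (a₁ ^ (n - k) * b₁ ^ k) + c₂ * (a₂ ^ (n - k) * b₂ ^ k)
      + c₃ * (a₃ ^ (n - k) * b₃ ^ k) + c₄ * (a₄ ^ (n - k) * b₄ ^ k) = 0) :
    (a₁ * b₃ - a₃ * b₁ = 0 ∧ a₂ * b₄ - a₄ * b₂ = 0) ∨
    (a₁ * b₄ - a₄ * b₁ = 0 ∧ a₂ * b₃ - a₃ * b₂ = 0) := by
  have hx1 : ¬(a₁ = 0 ∧ b₁ = 0) := by rintro ⟨u, v⟩; apply h12; rw [u, v]; ring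
  have hx2 : ¬(a₂ = 0 ∧ b₂ = 0) := by rintro ⟨u, v⟩; apply h12; rw [u, v]; ring
  by_cases h13 : a₁ * b₃ - a₃ * b₁ = 0
  · left
    refine ⟨h13, ?_⟩
    by_contra h24
    obtain ⟨l, hl1, hl2⟩ := par a₁ b₁ a₃ b₃ h13 hx1
    have h14 : a₁ * b₄ - a₄ * b₁ ≠ 0 := by
      intro h14
      exact h34 (cross_trans a₁ b₁ a₃ b₃ a₄ b₄ h13 h14 hx1)
    have h' : ∀ k ≤ n, (c₁ + c₃ * l ^ n) * (a₁ ^ (n - k) * b₁ ^ k)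
        + c₂ * (a₂ ^ (n - k) * b₂ ^ k) + c₄ * (a₄ ^ (n - k) * b₄ ^ k) = 0 := by
      intro k hk
      have e := h k hk
      rw [hl1, hl2] at e
      simp only [mul_pow] at e
      have el : l ^ (n - k) * l ^ k = l ^ n := by
        rw [← pow_add]; congr 1; omega
      linear_combination e - c₃ * (a₁ ^ (n - k) * b₁ ^ k) * el
    obtain ⟨-, u2, -⟩ := powvec_three n (by omega) a₁ b₁ a₂ b₂ a₄ b₄ _ _ _ h12 h14 h24 h'
    exact hc2 u2
  · by_cases h14 : a₁ * b₄ - a₄ * b₁ = 0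
    · right
      refine ⟨h14, ?_⟩
      by_contra h23
      obtain ⟨l, hl1, hl2⟩ := par a₁ b₁ a₄ b₄ h14 hx1
      have h' : ∀ k ≤ n, (c₁ + c₄ * l ^ n) * (a₁ ^ (n - k) * b₁ ^ k)
          + c₂ * (a₂ ^ (n - k) * b₂ ^ k) + c₃ * (a₃ ^ (n - k) * b₃ ^ k) = 0 := by
        intro k hk
        have e := h k hk
        rw [hl1, hl2] at e
        simp only [mul_pow] at e
        have el : l ^ (n - k) * l ^ k = l ^ n := by
          rw [← pow_add]; congr 1; omega
        linear_combination e - c₄ * (a₁ ^ (n - k) * b₁ ^ k) * el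
      obtain ⟨-, u2, -⟩ := powvec_three n (by omega) a₁ b₁ a₂ b₂ a₃ b₃ _ _ _ h12 h13 h23 h'
      exact hc2 u2
    · exfalso
      by_cases h23 : a₂ * b₃ - a₃ * b₂ = 0
      · obtain ⟨l, hl1, hl2⟩ := par a₂ b₂ a₃ b₃ h23 hx2
        have h24 : a₂ * b₄ - a₄ * b₂ ≠ 0 := by
          intro h24
          exact h34 (cross_trans a₂ b₂ a₃ b₃ a₄ b₄ h23 h24 hx2)
        have h' : ∀ k ≤ n, c₁ * (a₁ ^ (n - k) * b₁ ^ k)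
            + (c₂ + c₃ * l ^ n) * (a₂ ^ (n - k) * b₂ ^ k)
            + c₄ * (a₄ ^ (n - k) * b₄ ^ k) = 0 := by
          intro k hk
          have e := h k hk
          rw [hl1, hl2] at e
          simp only [mul_pow] at e
          have el : l ^ (n - k) * l ^ k = l ^ n := by
            rw [← pow_add]; congr 1; omega
          linear_combination e - c₃ * (a₂ ^ (n - k) * b₂ ^ k) * el
        obtain ⟨u1, -, -⟩ := powvec_three n (by omega) a₁ b₁ a₂ b₂ a₄ b₄ _ _ _ h12 h14 h24 h'
        exact hc1 u1
      · by_cases h24 : a₂ * b₄ - a₄ * b₂ = 0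
        · obtain ⟨l, hl1, hl2⟩ := par a₂ b₂ a₄ b₄ h24 hx2
          have h' : ∀ k ≤ n, c₁ * (a₁ ^ (n - k) * b₁ ^ k)
              + (c₂ + c₄ * l ^ n) * (a₂ ^ (n - k) * b₂ ^ k)
              + c₃ * (a₃ ^ (n - k) * b₃ ^ k) = 0 := by
            intro k hk
            have e := h k hk
            rw [hl1, hl2] at e
            simp only [mul_pow] at e
            have el : l ^ (n - k) * l ^ k = l ^ n := by
              rw [← pow_add]; congr 1; omega
            linear_combination e - c₄ * (a₂ ^ (n - k) * b₂ ^ k) * el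
          obtain ⟨u1, -, -⟩ := powvec_three n (by omega) a₁ b₁ a₂ b₂ a₃ b₃ _ _ _ h12 h13 h23 h'
          exact hc1 u1
        · exact hc1 (powvec_four n hn a₁ b₁ a₂ b₂ a₃ b₃ a₄ b₄ c₁ c₂ c₃ c₄
            h12 h13 h14 h23 h24 h34 h)

lemma alpha_sq : alpha ^ 2 = Complex.I := by
  have h2 : ((Real.sqrt 2 : ℝ) : ℂ) ^ 2 = 2 := by
    norm_cast
    exact Real.sq_sqrt (by norm_num)
  rw [alpha, div_pow, h2]
  have : (1 + Complex.I) ^ 2 = 2 * Complex.I := by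
    have := Complex.I_sq
    linear_combination this
  rw [this]
  ring

/-- If `f = v₀^{⊗n} + v₁^{⊗n}` with `v₀ = (a₀, b₀)`, `v₁ = (a₁, b₁)` linearly independent,
`n ≥ 3`, and `f ∈ 𝒜₃`, then `2 (a₀ a₁ + b₀ b₁)² = −(a₁ b₀ − a₀ b₁)²`, i.e.
`θ(v₀, v₁) = −1/2`. -/
theorem stmt_9 (n : ℕ) (hn : 3 ≤ n) (a₀ b₀ a₁ b₁ : ℂ)
    (hli : LinearIndependent ℂ ![(a₀, b₀), (a₁, b₁)]) (f : ℕ → ℂ)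
    (hf : ∀ k ≤ n, f k = a₀ ^ (n - k) * b₀ ^ k + a₁ ^ (n - k) * b₁ ^ k)
    (hmem : MemA3 n f) :
    2 * (a₀ * a₁ + b₀ * b₁) ^ 2 = -(a₁ * b₀ - a₀ * b₁) ^ 2 := by
  -- cross product of v₀, v₁ is nonzero
  have hcv : a₀ * b₁ - a₁ * b₀ ≠ 0 := by
    intro hD
    have key := Fintype.linearIndependent_iff.mp hli
    have h1 := key ![b₁, -b₀] (by
      simp only [Fin.sum_univ_two, Prod.ext_iff, Matrix.cons_val_zero,
        Matrix.cons_val_one, Matrix.head_cons, Prod.fst_add, Prod.snd_add,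
        smul_eq_mul, Prod.smul_mk, Prod.fst_zero, Prod.snd_zero]
      exact ⟨by linear_combination hD, by ring⟩)
    have hb1 : b₁ = 0 := by simpa using h1 0
    have hb0 : b₀ = 0 := by have := h1 1; simpa using this
    have h2 := key ![a₁, -a₀] (by
      simp only [Fin.sum_univ_two, Prod.ext_iff, Matrix.cons_val_zero,
        Matrix.cons_val_one, Matrix.head_cons, Prod.fst_add, Prod.snd_add,
        smul_eq_mul, Prod.smul_mk, Prod.fst_zero, Prod.snd_zero]
      exact ⟨by ring, by linear_combination -hD⟩)
    have ha1 : a₁ = 0 := by simpa using h2 0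
    have ha0 : a₀ = 0 := by have := h2 1; simpa using this
    have h3 := key ![1, 0] (by simp [Fin.sum_univ_two, ha0, hb0, Prod.ext_iff])
    have := h3 0
    simp at this
  obtain ⟨H, c, r, hH, hc, hr, hfc⟩ := hmem
  -- entries of H and orthogonality relations
  have o00 : H 0 0 * H 0 0 + H 1 0 * H 1 0 = 1 := by
    have := congrFun (congrFun hH 0) 0
    simpa [Matrix.mul_apply, Fin.sum_univ_two, Matrix.transpose_apply, Matrix.one_apply]
      using this
  have o01 : H 0 0 * H 0 1 + H 1 0 * H 1 1 = 0 := by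
    have := congrFun (congrFun hH 0) 1
    simpa [Matrix.mul_apply, Fin.sum_univ_two, Matrix.transpose_apply, Matrix.one_apply]
      using this
  have o11 : H 0 1 * H 0 1 + H 1 1 * H 1 1 = 1 := by
    have := congrFun (congrFun hH 1) 1
    simpa [Matrix.mul_apply, Fin.sum_univ_two, Matrix.transpose_apply, Matrix.one_apply]
      using this
  have hD2 : (H 0 0 * H 1 1 - H 0 1 * H 1 0) ^ 2 = 1 := by
    linear_combination (H 0 1 * H 0 1 + H 1 1 * H 1 1) * o00 + o11
      - (H 0 0 * H 0 1 + H 1 0 * H 1 1) * o01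
  -- the two decomposition vectors
  obtain ⟨u0, hu0⟩ : ∃ x : ℂ, x = H 0 0 + H 0 1 * alpha := ⟨_, rfl⟩
  obtain ⟨u1, hu1⟩ : ∃ x : ℂ, x = H 1 0 + H 1 1 * alpha := ⟨_, rfl⟩
  obtain ⟨w0, hw0⟩ : ∃ x : ℂ, x = H 0 0 - H 0 1 * alpha := ⟨_, rfl⟩
  obtain ⟨w1, hw1⟩ : ∃ x : ℂ, x = H 1 0 - H 1 1 * alpha := ⟨_, rfl⟩
  have hm0 : H.mulVec ![1, alpha] 0 = u0 := by
    rw [hu0]; simp [Matrix.mulVec, dotProduct, Fin.sum_univ_two]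
  have hm1 : H.mulVec ![1, alpha] 1 = u1 := by
    rw [hu1]; simp [Matrix.mulVec, dotProduct, Fin.sum_univ_two]
  have hm2 : H.mulVec ![1, -alpha] 0 = w0 := by
    rw [hw0]; simp [Matrix.mulVec, dotProduct, Fin.sum_univ_two]; ring
  have hm3 : H.mulVec ![1, -alpha] 1 = w1 := by
    rw [hw1]; simp [Matrix.mulVec, dotProduct, Fin.sum_univ_two]; ring
  simp only [hm0, hm1, hm2, hm3] at hfc
  -- dot product and squared cross product of u, w
  have hdot : u0 * w0 + u1 * w1 = 1 - Complex.I := by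
    rw [hu0, hu1, hw0, hw1]
    linear_combination o00 - alpha ^ 2 * o11 - alpha_sq
  have hcr2 : (u0 * w1 - u1 * w0) ^ 2 = 4 * Complex.I := by
    rw [hu0, hu1, hw0, hw1]
    linear_combination (4 * alpha ^ 2) * hD2 + 4 * alpha_sq
  have h4I : (4 : ℂ) * Complex.I ≠ 0 := by
    simp [Complex.I_ne_zero]
  have hcruw : u0 * w1 - u1 * w0 ≠ 0 := by
    intro h0
    rw [h0] at hcr2
    exact h4I (by linear_combination -hcr2)
  -- the four-term relation
  have heq : ∀ k ≤ n, (1 : ℂ) * (a₀ ^ (n - k) * b₀ ^ k) + (1 : ℂ) * (a₁ ^ (n - k) * b₁ ^ k)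
      + (-c) * (u0 ^ (n - k) * u1 ^ k)
      + (-(c * Complex.I ^ r)) * (w0 ^ (n - k) * w1 ^ k) = 0 := by
    intro k hk
    have e1 := hf k hk
    have e2 := hfc k hk
    linear_combination e2 - e1
  have hIr : (-(c * Complex.I ^ r)) ≠ 0 :=
    neg_ne_zero.mpr (mul_ne_zero hc (pow_ne_zero _ Complex.I_ne_zero))
  have hcneg : (-c : ℂ) ≠ 0 := neg_ne_zero.mpr hc
  have hone : (1 : ℂ) ≠ 0 := one_ne_zero
  have hcruw' : u0 * w1 - w0 * u1 ≠ 0 := fun h => hcruw (by linear_combination h)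
  have hpair := pairing n hn a₀ b₀ a₁ b₁ u0 u1 w0 w1 1 1 (-c) (-(c * Complex.I ^ r))
    hcv hcruw' hone hone heq
  have hx0 : ¬(a₀ = 0 ∧ b₀ = 0) := by rintro ⟨u, v⟩; apply hcv; rw [u, v]; ring
  have hx1 : ¬(a₁ = 0 ∧ b₁ = 0) := by rintro ⟨u, v⟩; apply hcv; rw [u, v]; ring
  rcases hpair with ⟨p1, p2⟩ | ⟨p1, p2⟩
  · -- u ∥ v₀, w ∥ v₁
    obtain ⟨l, hl1, hl2⟩ := par a₀ b₀ u0 u1 p1 hx0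
    obtain ⟨m, hm1', hm2'⟩ := par a₁ b₁ w0 w1 p2 hx1
    rw [hl1, hl2, hm1', hm2'] at hdot hcr2
    have hlm : l * m ≠ 0 := by
      intro h0
      apply h4I
      rw [← hcr2]
      linear_combination (l * m * (a₀ * b₁ - b₀ * a₁) ^ 2) * h0
    have key : (l * m) ^ 2 * (2 * (a₀ * a₁ + b₀ * b₁) ^ 2) =
        (l * m) ^ 2 * (-(a₁ * b₀ - a₀ * b₁) ^ 2) := by
      linear_combination (2 * (l * m * (a₀ * a₁ + b₀ * b₁)) + 2 * (1 - Complex.I)) * hdot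
        + hcr2 + 2 * Complex.I_sq
    exact mul_left_cancel₀ (pow_ne_zero 2 hlm) key
  · -- u ∥ v₁, w ∥ v₀
    obtain ⟨l, hl1, hl2⟩ := par a₁ b₁ u0 u1 p2 hx1
    obtain ⟨m, hm1', hm2'⟩ := par a₀ b₀ w0 w1 p1 hx0
    rw [hl1, hl2, hm1', hm2'] at hdot hcr2
    have hlm : l * m ≠ 0 := by
      intro h0
      apply h4I
      rw [← hcr2]
      linear_combination (l * m * (a₁ * b₀ - b₁ * a₀) ^ 2) * h0
    have key : (l * m) ^ 2 * (2 * (a₀ * a₁ + b₀ * b₁) ^ 2) =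
        (l * m) ^ 2 * (-(a₁ * b₀ - a₀ * b₁) ^ 2) := by
      linear_combination (2 * (l * m * (a₀ * a₁ + b₀ * b₁)) + 2 * (1 - Complex.I)) * hdot
        + hcr2 + 2 * Complex.I_sq
    exact mul_left_cancel₀ (pow_ne_zero 2 hlm) key
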